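/- For every ε > 0 there exists m_0 such that for all m ≥ m_0: the average 1-block-sensitivity of f_Surj satisfies bs̄_1(f_Surj) ≥ M, and the average 0-block-sensitivity satisfies bs̄_0(f_Surj) ≥ (1/(e−1) − ε)·(N − M). (Here bs̄_b(f) := E[ bs_X(f) ] over X drawn uniformly from {X ∈ [M]^N : f(X) = b}.) -/

import Mathlib

namespace GLN

noncomputable section

open Finset

/-- `M = 2^m`. -/
def MM (m : ℕ) : ℕ := 2 ^ m

/-- `N = ⌈M · m · ln 2⌉`. -/
def NN (m : ℕ) : ℕ := ⌈(MM m : ℝ) * m * Real.log 2⌉₊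

/-- Strings `X ∈ [M]^N`. -/
abbrev Str (m : ℕ) := Fin (NN m) → Fin (MM m)

/-- The uniform probability mass function on `[M]^N`. -/
def umass (m : ℕ) (_X : Str m) : ℝ := 1 / (MM m : ℝ) ^ NN m

/-- The image `Im(X) ⊆ [M]` of a string, as a finset. -/
def img {m : ℕ} (X : Str m) : Finset (Fin (MM m)) := Finset.image X Finset.univ

/-- Transition kernel of `D_y(X)`: each coordinate with `x_i = y` is replaced by a uniform
independent sample from `[M] \ {y}`; other coordinates are unchanged. -/
def kerDy (m : ℕ) (y : Fin (MM m)) (X Z : Str m) : ℝ :=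
  ∏ i, if X i = y then (if Z i = y then 0 else 1 / ((MM m : ℝ) - 1))
       else (if Z i = X i then 1 else 0)

/-- Transition kernel of `D(X)`: choose `y` uniformly in `[M]`, then apply `D_y`. -/
def kerD (m : ℕ) (X Z : Str m) : ℝ := (1 / (MM m : ℝ)) * ∑ y, kerDy m y X Z

/-- The probability mass function of the distribution `D = D(U)`. -/
def dmass (m : ℕ) (Z : Str m) : ℝ := ∑ X, umass m X * kerD m X Z

/-- Transition kernel of `D_y^inv(Z)`: each coordinate is independently replaced by `y`
with probability `1/M` and left unchanged otherwise. -/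
def kerDinvy (m : ℕ) (y : Fin (MM m)) (Z W : Str m) : ℝ :=
  ∏ i, ((1 / (MM m : ℝ)) * (if W i = y then 1 else 0)
        + (1 - 1 / (MM m : ℝ)) * (if W i = Z i then 1 else 0))

/-- Transition kernel of `D^inv(Z)`: choose `y` uniformly in `[M] \ Im(Z)`,
then apply `D_y^inv`. -/
def kerDinv (m : ℕ) (Z W : Str m) : ℝ :=
  (1 / (((img Z)ᶜ.card : ℝ))) * ∑ y ∈ (img Z)ᶜ, kerDinvy m y Z W

/-- Probability of an event under a mass function. -/
def pr {m : ℕ} (μ : Str m → ℝ) (E : Set (Str m)) : ℝ := ∑ X, E.indicator μ X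

/-- Expectation of a real function under a mass function. -/
def ev {m : ℕ} (μ : Str m → ℝ) (g : Str m → ℝ) : ℝ := ∑ X, μ X * g X

/-- The surjectivity function `f_Surj`. -/
def fSurjB (m : ℕ) (X : Str m) : Bool := decide (img X = Finset.univ)

/-- The `q.2`-th bit of the binary encoding of coordinate `x_{q.1}` of `X`;
this realizes `X` as a string of `n = N·m` bits. -/
def bit {m : ℕ} (X : Str m) (q : Fin (NN m) × Fin m) : Bool :=
  Nat.testBit (X q.1).val q.2.val


/-- The block-sensitivity of `f` at `X`: the largest `t` for which there exist pairwise
disjoint blocks `B_1,…,B_t ⊆ [N]` and strings `X^{(1)},…,X^{(t)}`, with `X^{(j)}` agreeing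
with `X` outside `B_j`, such that `f(X^{(j)}) ≠ f(X)` for every `j`. -/
def bs {m : ℕ} (f : Str m → Bool) (X : Str m) : ℕ :=
  sSup {t : ℕ | ∃ B : Fin t → Finset (Fin (NN m)),
    (∀ j j', j ≠ j' → Disjoint (B j) (B j')) ∧
    ∃ X' : Fin t → Str m, ∀ j, (∀ i, i ∉ B j → X' j i = X i) ∧ f (X' j) ≠ f X}

/-- The average `b`-block-sensitivity of `f`: the expectation of `bs_X(f)` over `X`
drawn uniformly from `{X : f(X) = b}`. -/
def avgBs (m : ℕ) (f : Str m → Bool) (b : Bool) : ℝ :=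
  (∑ X ∈ Finset.univ.filter (fun X : Str m => f X = b), (bs f X : ℝ)) /
    ((Finset.univ.filter fun X : Str m => f X = b).card : ℝ)


section AuxGLN
variable {m : ℕ}

def bsSet (f : Str m → Bool) (X : Str m) : Set ℕ :=
  {t : ℕ | ∃ B : Fin t → Finset (Fin (NN m)),
    (∀ j j', j ≠ j' → Disjoint (B j) (B j')) ∧
    ∃ X' : Fin t → Str m, ∀ j, (∀ i, i ∉ B j → X' j i = X i) ∧ f (X' j) ≠ f X}

lemma bs_eq (f : Str m → Bool) (X : Str m) : bs f X = sSup (bsSet f X) := rfl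

lemma mem_bsSet_le {f : Str m → Bool} {X : Str m} {t : ℕ} (h : t ∈ bsSet f X) : t ≤ NN m := by
  obtain ⟨B, hd, X', hX'⟩ := h
  have hne : ∀ j, (B j).Nonempty := by
    intro j
    rcases (B j).eq_empty_or_nonempty with he | h
    · exact absurd (by congr 1; funext i; exact (hX' j).1 i (by simp [he])) (hX' j).2
    · exact h
  calc t = ∑ _j : Fin t, 1 := by simp
    _ ≤ ∑ j : Fin t, (B j).card := sum_le_sum fun j _ => (hne j).card_pos
    _ = (univ.biUnion B).card := (card_biUnion (fun x _ y _ h => hd x y h)).symm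
    _ ≤ (univ : Finset (Fin (NN m))).card := card_le_card (subset_univ _)
    _ = NN m := by simp

lemma le_bs {f : Str m → Bool} {X : Str m} {t : ℕ} (h : t ∈ bsSet f X) : t ≤ bs f X :=
  le_csSup ⟨NN m, fun _ hy => mem_bsSet_le hy⟩ h

lemma two_le_MM (hm : 1 ≤ m) : 2 ≤ MM m := by
  calc 2 = 2^1 := rfl
  _ ≤ 2^m := Nat.pow_le_pow_right (by norm_num) hm

lemma MM_pos : 0 < MM m := Nat.pow_pos (by norm_num) -- check name

lemma fSurjB_true_iff {X : Str m} : fSurjB m X = true ↔ img X = univ := by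
  simp [fSurjB]

lemma fSurjB_false_iff {X : Str m} : fSurjB m X = false ↔ img X ≠ univ := by
  simp [fSurjB]

lemma bs_true_ge (hm : 1 ≤ m) {X : Str m} (hX : fSurjB m X = true) :
    MM m ≤ bs (fSurjB m) X := by
  have h2 : 2 ≤ MM m := two_le_MM hm
  have hsurj : ∀ y : Fin (MM m), ∃ i, X i = y := by
    intro y
    have := fSurjB_true_iff.1 hX
    have : y ∈ img X := by rw [this]; exact mem_univ y
    simpa [img, eq_comm] using this
  set a : Fin (MM m) := ⟨0, MM_pos⟩ with ha
  set b : Fin (MM m) := ⟨1, by omega⟩ with hb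
  have hab : a ≠ b := by simp [ha, hb, Fin.ext_iff]
  set oth : Fin (MM m) → Fin (MM m) := fun y => if y = a then b else a with hoth
  have hothne : ∀ y, oth y ≠ y := by
    intro y
    by_cases h : y = a <;> simp [hoth, h]
    · exact fun hc => hab hc.symm
    · exact fun hc => h hc.symm
  refine le_bs ⟨fun y => univ.filter (fun i => X i = y), ?_, fun y i => if X i = y then oth y else X i, ?_⟩
  · intro j j' hjj'
    simp only [disjoint_left, mem_filter]
    rintro i ⟨-, h1⟩ ⟨-, h2⟩
    exact hjj' (h1 ▸ h2 ▸ rfl)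
  · intro y
    constructor
    · intro i hi
      have : ¬ X i = y := by simpa using hi
      simp [this]
    · rw [hX]
      have : fSurjB m (fun i => if X i = y then oth y else X i) = false := by
        rw [fSurjB_false_iff]
        intro hc
        have hy : y ∈ img (fun i => if X i = y then oth y else X i) := by
          rw [hc]; exact mem_univ y
        simp only [img, mem_image, mem_univ, true_and] at hy
        obtain ⟨i, hi⟩ := hy
        by_cases h : X i = y
        · rw [if_pos h] at hi; exact hothne y hi
        · rw [if_neg h] at hi; exact h hi
      simp [this]


lemma key_nat (hm : 30 ≤ m) : 1400 * (m + 1) + 6 ≤ 2 ^ m := by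
  induction m, hm using Nat.le_induction with
  | base => norm_num
  | succ n hn ih =>
    have h2 : 1400 ≤ 2 ^ n := le_trans (by norm_num) (Nat.pow_le_pow_right (by norm_num) hn)
    have : 2 ^ (n+1) = 2 ^ n + 2 ^ n := by ring
    omega

lemma MM_cast : ((MM m : ℕ) : ℝ) = 2 ^ m := by simp [MM]

lemma MM_big (hm : 30 ≤ m) : (1073741824 : ℝ) ≤ (MM m : ℝ) := by
  rw [MM_cast]
  calc (1073741824 : ℝ) = 2 ^ 30 := by norm_num
  _ ≤ 2 ^ m := by
    apply pow_le_pow_right₀ (by norm_num) hm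

lemma NN_lo : (MM m : ℝ) * m * Real.log 2 ≤ NN m := Nat.le_ceil _

lemma NN_hi : (NN m : ℝ) ≤ (MM m : ℝ) * m * Real.log 2 + 1 := by
  have h : (0:ℝ) ≤ (MM m : ℝ) * m * Real.log 2 := by
    have := Real.log_nonneg (by norm_num : (1:ℝ) ≤ 2)
    positivity
  exact le_of_lt (Nat.ceil_lt_add_one h)

lemma key_real (hm : 30 ≤ m) : 1400 * ((m:ℝ) + 1) + 6 ≤ (MM m : ℝ) := by
  have := key_nat hm
  calc 1400 * ((m:ℝ) + 1) + 6 = ((1400 * (m+1) + 6 : ℕ) : ℝ) := by push_cast; ring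
  _ ≤ ((2^m : ℕ) : ℝ) := Nat.cast_le.2 this
  _ = (MM m : ℝ) := by rw [MM_cast]; push_cast; ring

-- basic setup names
lemma tr_cast (h1 : 1 ≤ MM m) : ((MM m - 1 : ℕ) : ℝ) = (MM m : ℝ) - 1 := by
  push_cast [h1]; ring

lemma term_upper (hm : 30 ≤ m) {j : ℕ} (hjt : j ≤ MM m - 1) :
    ((MM m - 1).choose j : ℝ) * (((MM m - 1 - j : ℕ)) : ℝ) ^ (NN m) * (j.factorial : ℝ)
      ≤ ((MM m : ℝ) - 1) ^ (NN m) := by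
  have hMb := MM_big hm
  have h1 : 1 ≤ MM m := by
    have : (1:ℝ) ≤ (MM m : ℝ) := by linarith
    exact_mod_cast this
  set t : ℕ := MM m - 1 with htdef
  set n : ℕ := NN m with hndef
  have htr : ((t:ℕ):ℝ) = (MM m : ℝ) - 1 := tr_cast h1
  set tr : ℝ := (MM m : ℝ) - 1 with htrdef
  have htrpos : (0:ℝ) < tr := by linarith
  have hjt' : j ≤ t := hjt
  have ha : ((t - j : ℕ) : ℝ) = tr - j := by
    rw [Nat.cast_sub hjt', htr]
  set a : ℝ := tr - (j:ℝ) with hadef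
  have hapos : (0:ℝ) ≤ a := by
    have h9 : ((j:ℕ):ℝ) ≤ ((t:ℕ):ℝ) := Nat.cast_le.2 hjt'
    rw [htr] at h9
    simp only [hadef]; linarith
  -- step 1 : descFactorial bound
  have hd1 : ((t.choose j : ℕ) : ℝ) * (j.factorial : ℝ) ≤ tr ^ j := by
    have h := Nat.descFactorial_le_pow t j
    have h2 : (t.descFactorial j : ℝ) ≤ ((t:ℕ):ℝ) ^ j := by
      calc (t.descFactorial j : ℝ) ≤ ((t ^ j : ℕ) : ℝ) := Nat.cast_le.2 h
      _ = ((t:ℕ):ℝ) ^ j := by push_cast; ring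
    rw [htr] at h2
    calc ((t.choose j : ℕ) : ℝ) * (j.factorial : ℝ) = ((j.factorial * t.choose j : ℕ) : ℝ) := by push_cast; ring
    _ = (t.descFactorial j : ℝ) := by rw [← Nat.descFactorial_eq_factorial_mul_choose]
    _ ≤ tr ^ j := h2
  -- step 2 : a ≤ tr * exp (-(j/tr))
  have hs2 : a ≤ tr * Real.exp (-(j/tr)) := by
    have h := Real.add_one_le_exp (-(j/tr))
    have := mul_le_mul_of_nonneg_left h (le_of_lt htrpos)
    calc a = tr * (-(j/tr) + 1) := by field_simp; rw [hadef]; ring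
    _ ≤ tr * Real.exp (-(j/tr)) := this
  -- step 3 : a^n ≤ tr^n * exp(-(j*n/tr))
  have hs3 : a ^ n ≤ tr ^ n * Real.exp (-(j/tr)) ^ n := by
    calc a ^ n ≤ (tr * Real.exp (-(j/tr))) ^ n := pow_le_pow_left₀ hapos hs2 n
    _ = tr ^ n * Real.exp (-(j/tr)) ^ n := mul_pow _ _ _
  -- step 4 : tr^j ≤ exp(j*n/tr)
  have htr1 : (1:ℝ) ≤ tr := by linarith
  have hlogtr : Real.log tr ≤ (n:ℝ) / tr := by
    have hl1 : Real.log tr ≤ Real.log (MM m : ℝ) := Real.log_le_log htrpos (by linarith)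
    have hl2 : Real.log (MM m : ℝ) = (m:ℝ) * Real.log 2 := by
      rw [MM_cast, Real.log_pow]
    have hl3 : tr * ((m:ℝ) * Real.log 2) ≤ (n:ℝ) := by
      have hlog2 : (0:ℝ) ≤ Real.log 2 := Real.log_nonneg (by norm_num)
      have := NN_lo (m := m)
      have h4 : tr * ((m:ℝ) * Real.log 2) ≤ (MM m : ℝ) * m * Real.log 2 := by
        have : (0:ℝ) ≤ (m:ℝ) * Real.log 2 := by positivity
        nlinarith
      exact le_trans h4 this
    rw [le_div_iff₀ htrpos]
    calc Real.log tr * tr ≤ ((m:ℝ) * Real.log 2) * tr := by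
          rw [hl2] at hl1
          have hlog' : (0:ℝ) ≤ Real.log tr := Real.log_nonneg htr1
          nlinarith
    _ ≤ (n:ℝ) := by linarith [hl3]
  have hs4 : tr ^ j ≤ Real.exp ((j:ℝ) * (n/tr)) := by
    have h1' : tr ^ j = Real.exp ((j:ℝ) * Real.log tr) := by
      rw [← Real.log_pow, Real.exp_log (by positivity)]
    rw [h1']
    apply Real.exp_le_exp.2
    have : (0:ℝ) ≤ (j:ℝ) := by positivity
    calc (j:ℝ) * Real.log tr ≤ (j:ℝ) * ((n:ℝ)/tr) := by nlinarith
    _ = (j:ℝ) * (n/tr) := rfl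
  -- combine
  have hexp : Real.exp (-(j/tr)) ^ n = Real.exp (-((j:ℝ) * n / tr)) := by
    rw [← Real.exp_nat_mul]
    congr 1
    ring
  calc ((t.choose j : ℕ) : ℝ) * (((t - j : ℕ)) : ℝ) ^ n * (j.factorial : ℝ)
      = (((t.choose j : ℕ) : ℝ) * (j.factorial : ℝ)) * (((t - j : ℕ)) : ℝ) ^ n := by ring
    _ ≤ tr ^ j * a ^ n := by
        apply mul_le_mul hd1 (by rw [ha]) (by positivity) (by positivity)
    _ ≤ tr ^ j * (tr ^ n * Real.exp (-(j/tr)) ^ n) := by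
        apply mul_le_mul_of_nonneg_left hs3 (by positivity)
    _ = (tr ^ j * Real.exp (-((j:ℝ) * n / tr))) * tr ^ n := by rw [hexp]; ring
    _ ≤ (Real.exp ((j:ℝ) * (n/tr)) * Real.exp (-((j:ℝ) * n / tr))) * tr ^ n := by
        apply mul_le_mul_of_nonneg_right _ (by positivity)
        apply mul_le_mul_of_nonneg_right hs4 (le_of_lt (Real.exp_pos _))
    _ = tr ^ n := by
        rw [← Real.exp_add]
        have : (j:ℝ) * (n/tr) + (-((j:ℝ) * n / tr)) = 0 := by ring
        rw [this, Real.exp_zero, one_mul]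


set_option maxHeartbeats 1000000 in
lemma term_lower (hm : 30 ≤ m) {j : ℕ} (hj1 : 1 ≤ j) (hj : j ≤ 4) :
    0.97 * ((MM m : ℝ) - 1) ^ (NN m)
      ≤ ((MM m - 1).choose j : ℝ) * (((MM m - 1 - j : ℕ)) : ℝ) ^ (NN m) * (j.factorial : ℝ) := by
  have hMb := MM_big hm
  have hkey := key_real hm
  have h1 : 1 ≤ MM m := by
    have : (1:ℝ) ≤ (MM m : ℝ) := by linarith
    exact_mod_cast this
  set t : ℕ := MM m - 1 with htdef
  set n : ℕ := NN m with hndef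
  have htr : ((t:ℕ):ℝ) = (MM m : ℝ) - 1 := tr_cast h1
  set Mr : ℝ := (MM m : ℝ) with hMrdef
  set tr : ℝ := Mr - 1 with htrdef
  have hjr : ((j:ℕ):ℝ) ≤ 4 := by exact_mod_cast hj
  have hjr1 : (1:ℝ) ≤ ((j:ℕ):ℝ) := by exact_mod_cast hj1
  have htrpos : (0:ℝ) < tr := by rw [htrdef, hMrdef]; linarith
  have hjt : j ≤ t := by
    have h5 : ((j:ℕ):ℝ) ≤ ((t:ℕ):ℝ) := by rw [htr]; linarith
    exact_mod_cast h5
  have ha : ((t - j : ℕ) : ℝ) = tr - j := by rw [Nat.cast_sub hjt, htr]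
  set a : ℝ := tr - (j:ℝ) with hadef
  have hapos : (0:ℝ) < a := by rw [hadef, htrdef, hMrdef]; linarith
  have hja : a + (j:ℝ) = tr := by rw [hadef]; ring
  have hmlog : (0:ℝ) ≤ (m:ℝ) * Real.log 2 := by
    have := Real.log_nonneg (by norm_num : (1:ℝ) ≤ 2)
    positivity
  have hlog2hi : Real.log 2 ≤ 0.6932 := le_of_lt (lt_trans Real.log_two_lt_d9 (by norm_num))
  have hnlo : Mr * m * Real.log 2 ≤ (n:ℝ) := NN_lo
  have hnhi : (n:ℝ) ≤ Mr * m * Real.log 2 + 1 := NN_hi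
  -- descFactorial lower bound
  have hd1 : a ^ j ≤ ((t.choose j : ℕ) : ℝ) * (j.factorial : ℝ) := by
    have hnat : (t - j)^j ≤ t.descFactorial j :=
      le_trans (Nat.pow_le_pow_left (by omega) j) (Nat.pow_sub_le_descFactorial t j)
    calc a ^ j = (((t - j : ℕ) : ℝ)) ^ j := by rw [ha]
    _ = (((t - j)^j : ℕ) : ℝ) := by push_cast; ring
    _ ≤ ((t.descFactorial j : ℕ) : ℝ) := Nat.cast_le.2 hnat
    _ = ((t.choose j : ℕ) : ℝ) * (j.factorial : ℝ) := by
        rw [Nat.descFactorial_eq_factorial_mul_choose]; push_cast; ring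
  -- (I) tr^(n+j) ≤ a^(n+j) * exp(j*(n+j)/a)
  have hs1 : tr ≤ a * Real.exp ((j:ℝ)/a) := by
    have h := Real.add_one_le_exp ((j:ℝ)/a)
    have h2 := mul_le_mul_of_nonneg_left h (le_of_lt hapos)
    calc tr = a * ((j:ℝ)/a + 1) := by field_simp; rw [hadef]; ring
    _ ≤ a * Real.exp ((j:ℝ)/a) := h2
  have hI : tr ^ (n + j) ≤ a ^ (n + j) * Real.exp ((j:ℝ)*(n+j)/a) := by
    calc tr ^ (n+j) ≤ (a * Real.exp ((j:ℝ)/a)) ^ (n+j) :=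
          pow_le_pow_left₀ (le_of_lt htrpos) hs1 _
    _ = a ^ (n+j) * Real.exp ((j:ℝ)/a) ^ (n+j) := mul_pow _ _ _
    _ = a ^ (n+j) * Real.exp ((j:ℝ)*(n+j)/a) := by
        rw [← Real.exp_nat_mul]
        congr 2
        push_cast
        ring
  -- (II) Mr^j ≤ tr^j * exp(j/a)
  have hs3 : Mr ≤ tr * Real.exp (1/a) := by
    have htra : tr ≥ a := by rw [hadef]; linarith
    have h := Real.add_one_le_exp ((1:ℝ)/tr)
    have h2 := mul_le_mul_of_nonneg_left h (le_of_lt htrpos)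
    have h3 : Mr ≤ tr * Real.exp (1/tr) := by
      calc Mr = tr * ((1:ℝ)/tr + 1) := by field_simp; rw [htrdef]; ring
      _ ≤ tr * Real.exp (1/tr) := h2
    refine le_trans h3 (mul_le_mul_of_nonneg_left ?_ (le_of_lt htrpos))
    apply Real.exp_le_exp.2
    apply div_le_div_of_nonneg_left (by norm_num) hapos htra
  have hII : Mr ^ j ≤ tr ^ j * Real.exp ((j:ℝ)/a) := by
    calc Mr ^ j ≤ (tr * Real.exp (1/a)) ^ j := pow_le_pow_left₀ (by positivity) hs3 _
    _ = tr ^ j * Real.exp (1/a) ^ j := mul_pow _ _ _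
    _ = tr ^ j * Real.exp ((j:ℝ)/a) := by
        rw [← Real.exp_nat_mul]
        congr 2
        ring
  -- (III)
  have hIII : Mr ^ j = Real.exp ((j:ℝ) * ((m:ℝ) * Real.log 2)) := by
    have : Real.log Mr = (m:ℝ) * Real.log 2 := by rw [hMrdef, MM_cast, Real.log_pow]
    rw [← this, ← Real.log_pow, Real.exp_log (by positivity)]
  -- the exponent bound
  set E : ℝ := (m:ℝ) * Real.log 2 - ((n:ℝ) + j + 1)/a with hEdef
  have hEb : -0.005 ≤ E := by
    have hma : Mr - 5 ≤ a := by rw [hadef, htrdef]; linarith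
    have hm0 : (0:ℝ) ≤ (m:ℝ) := Nat.cast_nonneg m
    have hlogm : 5 * ((m:ℝ) * Real.log 2) ≤ 3.466 * m := by
      have h := mul_le_mul_of_nonneg_left hlog2hi (by positivity : (0:ℝ) ≤ 5 * (m:ℝ))
      nlinarith
    have e1 : (n:ℝ) + j + 1 ≤ Mr * m * Real.log 2 + 6 := by linarith
    have e2 : Mr * m * Real.log 2 - 5 * ((m:ℝ) * Real.log 2) ≤ a * ((m:ℝ) * Real.log 2) := by
      have h := mul_le_mul_of_nonneg_right hma hmlog
      have hexp : (Mr - 5) * ((m:ℝ) * Real.log 2) = Mr * m * Real.log 2 - 5 * ((m:ℝ) * Real.log 2) := by ring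
      linarith
    have e3 : 7 * ((m:ℝ) + 1) ≤ 0.005 * a := by linarith
    have e4 : (n:ℝ) + j + 1 - a * ((m:ℝ) * Real.log 2) ≤ 0.005 * a := by
      nlinarith [e1, e2, e3, hlogm, hm0]
    rw [hEdef]
    have e5 : ((n:ℝ) + j + 1)/a ≤ (m:ℝ) * Real.log 2 + 0.005 := by
      rw [div_le_iff₀ hapos]
      have hexp2 : ((m:ℝ) * Real.log 2 + 0.005) * a = a * ((m:ℝ) * Real.log 2) + 0.005 * a := by ring
      linarith
    linarith
  have hjE : (-0.02 : ℝ) ≤ (j:ℝ) * E := by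
    rcases le_or_gt 0 E with hE0 | hE0
    · exact le_trans (by norm_num) (mul_nonneg (by positivity) hE0)
    · have h4 : (j:ℝ) * -E ≤ 4 * -E :=
        mul_le_mul_of_nonneg_right hjr (le_of_lt (neg_pos.2 hE0))
      rw [mul_neg, mul_neg] at h4
      have h5 : 4 * E ≤ (j:ℝ) * E := neg_le_neg_iff.mp h4
      have h6 : (-0.02:ℝ) ≤ 4 * E := by
        have h7 := mul_le_mul_of_nonneg_left hEb (by norm_num : (0:ℝ) ≤ 4)
        calc (-0.02:ℝ) = 4 * (-0.005) := by norm_num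
        _ ≤ 4 * E := h7
      exact le_trans h6 h5
  -- combine
  have hfinal : Real.exp ((j:ℝ)*E) * tr ^ n ≤ a ^ (n+j) := by
    have c1 : tr ^ (n+j) = tr ^ n * tr ^ j := pow_add tr n j
    have c2 : tr ^ n * (Mr ^ j * Real.exp (-((j:ℝ)/a)) * Real.exp (-((j:ℝ)*(n+j)/a))) ≤ a ^ (n+j) := by
      have d1 : Mr ^ j * Real.exp (-((j:ℝ)/a)) ≤ tr ^ j := by
        have := mul_le_mul_of_nonneg_right hII (le_of_lt (Real.exp_pos (-((j:ℝ)/a))))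
        rw [mul_assoc, ← Real.exp_add] at this
        simpa using this
      have d2 : tr ^ (n+j) * Real.exp (-((j:ℝ)*(n+j)/a)) ≤ a ^ (n+j) := by
        have := mul_le_mul_of_nonneg_right hI (le_of_lt (Real.exp_pos (-((j:ℝ)*(n+j)/a))))
        rw [mul_assoc, ← Real.exp_add] at this
        simpa using this
      calc tr ^ n * (Mr ^ j * Real.exp (-((j:ℝ)/a)) * Real.exp (-((j:ℝ)*(n+j)/a)))
          = (tr ^ n * (Mr ^ j * Real.exp (-((j:ℝ)/a)))) * Real.exp (-((j:ℝ)*(n+j)/a)) := by ring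
        _ ≤ (tr ^ n * tr ^ j) * Real.exp (-((j:ℝ)*(n+j)/a)) := by
            apply mul_le_mul_of_nonneg_right _ (le_of_lt (Real.exp_pos _))
            apply mul_le_mul_of_nonneg_left d1 (by positivity)
        _ = tr ^ (n+j) * Real.exp (-((j:ℝ)*(n+j)/a)) := by rw [c1]
        _ ≤ a ^ (n+j) := d2
    refine le_trans (le_of_eq ?_) c2
    rw [hIII, ← Real.exp_add, ← Real.exp_add]
    rw [mul_comm (Real.exp _) (tr ^ n)]
    congr 1
    rw [hEdef]
    field_simp
    ring
  have hexpE : (0.97:ℝ) ≤ Real.exp ((j:ℝ)*E) := by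
    have h1' : (0.98:ℝ) ≤ Real.exp (-0.02) := by
      have := Real.add_one_le_exp (-0.02 : ℝ)
      linarith
    have h2' : Real.exp (-0.02:ℝ) ≤ Real.exp ((j:ℝ)*E) := Real.exp_le_exp.2 hjE
    linarith
  calc 0.97 * tr ^ n ≤ Real.exp ((j:ℝ)*E) * tr ^ n := by
        apply mul_le_mul_of_nonneg_right hexpE (by positivity)
    _ ≤ a ^ (n+j) := hfinal
    _ = a ^ j * a ^ n := by rw [pow_add]; ring
    _ ≤ (((t.choose j : ℕ) : ℝ) * (j.factorial : ℝ)) * a ^ n := by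
        apply mul_le_mul_of_nonneg_right hd1 (by positivity)
    _ = ((t.choose j : ℕ) : ℝ) * (((t - j : ℕ)) : ℝ) ^ n * (j.factorial : ℝ) := by
        rw [ha]; ring


-- combination: the 6-term alternating series lower bound
lemma six_term_lower (hm : 30 ≤ m) :
    ((MM m : ℝ) - 1) ^ (NN m) / 3
      ≤ ∑ j ∈ range 6, (-1:ℝ)^j * (((MM m - 1).choose j : ℕ) : ℝ)
          * (((MM m - 1 - j : ℕ)) : ℝ) ^ (NN m) := by
  have hMb := MM_big hm
  have h1 : 1 ≤ MM m := by
    have : (1:ℝ) ≤ (MM m : ℝ) := by linarith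
    exact_mod_cast this
  have htr : ((MM m - 1 : ℕ) : ℝ) = (MM m : ℝ) - 1 := tr_cast h1
  have hM30n : 1073741824 ≤ MM m := by exact_mod_cast hMb
  have hu1 : (((MM m - 1 : ℕ)) : ℝ) * (((MM m - 1 - 1 : ℕ)) : ℝ) ^ (NN m)
      ≤ ((MM m : ℝ) - 1) ^ (NN m) := by
    have h := term_upper hm (j := 1) (by omega)
    simpa [Nat.factorial, Nat.choose_one_right] using h
  have hu3 : (((MM m - 1).choose 3 : ℕ) : ℝ) * (((MM m - 1 - 3 : ℕ)) : ℝ) ^ (NN m) * 6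
      ≤ ((MM m : ℝ) - 1) ^ (NN m) := by
    have h := term_upper hm (j := 3) (by omega)
    norm_num [Nat.factorial] at h
    linarith [h]
  have hu5 : (((MM m - 1).choose 5 : ℕ) : ℝ) * (((MM m - 1 - 5 : ℕ)) : ℝ) ^ (NN m) * 120
      ≤ ((MM m : ℝ) - 1) ^ (NN m) := by
    have h := term_upper hm (j := 5) (by omega)
    norm_num [Nat.factorial] at h
    linarith [h]
  have hl2 : 0.97 * ((MM m : ℝ) - 1) ^ (NN m)
      ≤ (((MM m - 1).choose 2 : ℕ) : ℝ) * (((MM m - 1 - 2 : ℕ)) : ℝ) ^ (NN m) * 2 := by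
    have h := term_lower hm (j := 2) (by norm_num) (by norm_num)
    norm_num [Nat.factorial] at h
    linarith [h]
  have hl4 : 0.97 * ((MM m : ℝ) - 1) ^ (NN m)
      ≤ (((MM m - 1).choose 4 : ℕ) : ℝ) * (((MM m - 1 - 4 : ℕ)) : ℝ) ^ (NN m) * 24 := by
    have h := term_lower hm (j := 4) (by norm_num) (by norm_num)
    norm_num [Nat.factorial] at h
    linarith [h]
  have hpos : (0:ℝ) ≤ ((MM m : ℝ) - 1) ^ (NN m) := by
    rw [← htr]; positivity
  rw [show (6:ℕ) = 5+1 from rfl]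
  simp only [Finset.sum_range_succ, Finset.sum_range_zero, Nat.choose_zero_right,
    Nat.sub_zero, Nat.cast_one]
  rw [htr]
  norm_num
  linarith [hu1, hu3, hu5, hl2, hl4, hpos]


def pif (S : Finset (Fin (MM m))) : Finset (Str m) := Fintype.piFinset (fun _ => S)

lemma card_pif (S : Finset (Fin (MM m))) : (pif S).card = S.card ^ NN m := by
  simp [pif]

lemma mem_pif {S : Finset (Fin (MM m))} {X : Str m} : X ∈ pif S ↔ ∀ i, X i ∈ S :=
  Fintype.mem_piFinset

lemma alt_sum (r J : ℕ) :
    ∑ j ∈ range (J+1), (-1:ℤ)^j * ((r+1).choose j) = (-1)^J * (r.choose J) := by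
  induction J with
  | zero => simp
  | succ J ih =>
    rw [sum_range_succ, ih, Nat.choose_succ_succ]
    push_cast
    ring

lemma alt_le (r : ℕ) :
    ∑ j ∈ range 6, (-1:ℤ)^j * (r.choose j) ≤ if r = 0 then 1 else 0 := by
  cases r with
  | zero =>
    simp [Finset.sum_range_succ]
  | succ r =>
    rw [show (6 : ℕ) = 5 + 1 from rfl, alt_sum r 5]
    simp only [Nat.succ_ne_zero, if_false]
    have : ((-1:ℤ))^5 = -1 := by norm_num
    rw [this]
    simp [neg_nonpos]

lemma sum_choose_miss (S : Finset (Fin (MM m))) (j : ℕ) :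
    ∑ X ∈ pif S, ((S \ img X).card).choose j = (S.card.choose j) * (S.card - j) ^ NN m := by
  classical
  have h1 : ∀ X ∈ pif S, ((S \ img X).card).choose j
      = ∑ T ∈ powersetCard j S, (if T ⊆ S \ img X then 1 else 0) := by
    intro X _
    rw [← card_powersetCard j (S \ img X), ← card_filter]
    congr 1
    ext T
    simp only [mem_powersetCard, mem_filter]
    constructor
    · rintro ⟨h1, h2⟩; exact ⟨⟨h1.trans sdiff_subset, h2⟩, h1⟩
    · rintro ⟨⟨_, h2⟩, h3⟩; exact ⟨h3, h2⟩
  rw [sum_congr rfl h1, sum_comm]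
  have h2 : ∀ T ∈ powersetCard j S,
      ∑ X ∈ pif S, (if T ⊆ S \ img X then 1 else 0) = (S.card - j) ^ NN m := by
    intro T hT
    obtain ⟨hTS, hTcard⟩ := mem_powersetCard.1 hT
    rw [← card_filter]
    have hfe : (pif S).filter (fun X => T ⊆ S \ img X) = pif (S \ T) := by
      ext X
      simp only [mem_filter, mem_pif]
      constructor
      · rintro ⟨hXS, hTd⟩ i
        refine mem_sdiff.2 ⟨hXS i, fun hXiT => ?_⟩
        have := mem_sdiff.1 (hTd hXiT)
        exact this.2 (by simp [img])
      · intro h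
        refine ⟨fun i => (mem_sdiff.1 (h i)).1, fun y hy => ?_⟩
        refine mem_sdiff.2 ⟨hTS hy, fun hyimg => ?_⟩
        simp only [img, mem_image, mem_univ, true_and] at hyimg
        obtain ⟨i, rfl⟩ := hyimg
        exact (mem_sdiff.1 (h i)).2 hy
    rw [hfe, card_pif, card_sdiff_of_subset hTS, hTcard]
  rw [sum_congr rfl h2, sum_const, card_powersetCard, smul_eq_mul]

lemma count_ge (S : Finset (Fin (MM m))) :
    ∑ j ∈ range 6, (-1:ℤ)^j * (S.card.choose j) * (((S.card - j : ℕ) : ℤ) ^ NN m)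
      ≤ ((univ.filter (fun X : Str m => img X = S)).card : ℤ) := by
  classical
  have h0 : univ.filter (fun X : Str m => img X = S)
      = (pif S).filter (fun X => S \ img X = ∅) := by
    ext X
    simp only [mem_filter, mem_univ, true_and, mem_pif, sdiff_eq_empty_iff_subset]
    constructor
    · rintro rfl
      exact ⟨fun i => by simp [img], subset_rfl⟩
    · rintro ⟨h1, h2⟩
      refine Finset.Subset.antisymm ?_ h2
      intro y hy
      simp only [img, mem_image, mem_univ, true_and] at hy
      obtain ⟨i, rfl⟩ := hy
      exact h1 i
  rw [h0, card_filter]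
  push_cast
  calc ∑ j ∈ range 6, (-1:ℤ)^j * (S.card.choose j) * (((S.card - j : ℕ) : ℤ) ^ NN m)
      = ∑ j ∈ range 6, (-1:ℤ)^j * ∑ X ∈ pif S, (((S \ img X).card).choose j : ℤ) := by
        refine sum_congr rfl fun j _ => ?_
        rw [mul_assoc]
        congr 1
        rw [← Nat.cast_sum]
        rw [show (∑ X ∈ pif S, (((S \ img X).card).choose j) : ℕ) = (S.card.choose j) * (S.card - j) ^ NN m from sum_choose_miss S j]
        push_cast
        ring
    _ = ∑ X ∈ pif S, ∑ j ∈ range 6, (-1:ℤ)^j * (((S \ img X).card).choose j : ℤ) := by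
        rw [sum_comm]
        exact sum_congr rfl fun j _ => by rw [mul_sum]
    _ ≤ ∑ X ∈ pif S, (if S \ img X = ∅ then 1 else 0) := by
        refine sum_le_sum fun X _ => ?_
        have := alt_le ((S \ img X).card)
        simpa [Finset.card_eq_zero] using this


-- key construction lemma: nat version
lemma bs_false_mem (hN : 0 < NN m) {X : Str m} (hX : fSurjB m X = false) :
    ((NN m - (img X).card) / (img X)ᶜ.card) ∈ bsSet (fSurjB m) X := by
  classical
  set k : ℕ := (img X)ᶜ.card with hk
  set s : ℕ := (img X).card with hs
  have hk1 : 1 ≤ k := by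
    rcases Finset.eq_empty_or_nonempty (img X)ᶜ with h | h
    · exact absurd (by simpa using congrArg compl h) (fSurjB_false_iff.1 hX)
    · exact Finset.card_pos.2 h
  set t : ℕ := (NN m - s) / k with ht
  -- representatives
  have hrepex : ∀ v ∈ img X, ∃ i, X i = v := by
    intro v hv; simpa [img, eq_comm] using hv
  set rep : Fin (MM m) → Fin (NN m) := fun v =>
    if h : ∃ i, X i = v then h.choose else ⟨0, hN⟩ with hrep
  have hrepspec : ∀ v ∈ img X, X (rep v) = v := by
    intro v hv
    have hex : ∃ i, X i = v := hrepex v hv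
    show X (if h : ∃ i, X i = v then h.choose else ⟨0, hN⟩) = v
    rw [dif_pos hex]; exact hex.choose_spec
  set R : Finset (Fin (NN m)) := (img X).image rep with hR
  have hRcard : R.card ≤ s := card_image_le
  -- free coordinates
  have hηcard : t * k ≤ Rᶜ.card := by
    have h1 : t * k ≤ NN m - s := Nat.div_mul_le_self _ _
    have h2 : NN m - s ≤ Rᶜ.card := by
      rw [card_compl]
      simp only [Fintype.card_fin]
      omega
    omega
  obtain ⟨F', hF'sub, hF'card⟩ := exists_subset_card_eq hηcard
  set e : {x // x ∈ F'} ≃ Fin (t * k) := equivFinOfCardEq hF'card with he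
  set ι : Fin t × Fin k → Fin (NN m) := fun p => (e.symm (finProdFinEquiv p) : Fin (NN m)) with hι
  have hιinj : Function.Injective ι := by
    intro p q hpq
    have := Subtype.ext hpq
    exact finProdFinEquiv.injective (e.symm.injective this)
  have hιF : ∀ p, ι p ∈ F' := fun p => (e.symm (finProdFinEquiv p)).2
  have hιR : ∀ p, ι p ∉ R := by
    intro p hmem
    -- F' ⊆ Rᶜ
    have := hF'sub (hιF p)
    simp only [Finset.mem_compl] at this
    exact this hmem
  -- enumeration of missing values
  set μ : Fin k → Fin (MM m) := fun b => ((img X)ᶜ.equivFin.symm b : Fin (MM m)) with hμ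
  have hμmem : ∀ b, μ b ∈ (img X)ᶜ := fun b => ((img X)ᶜ.equivFin.symm b).2
  have hμsurj : ∀ v ∈ (img X)ᶜ, ∃ b, μ b = v := by
    intro v hv
    exact ⟨(img X)ᶜ.equivFin ⟨v, hv⟩, by simp [hμ]⟩
  refine ⟨fun j => (univ : Finset (Fin k)).image (fun b => ι (j, b)), ?_, 
    fun j i => if h : ∃ b, ι (j, b) = i then μ h.choose else X i, ?_⟩
  · intro j j' hjj'
    simp only [disjoint_left, mem_image, mem_univ, true_and]
    rintro i ⟨b, hb⟩ ⟨b', hb'⟩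
    have : (j, b) = (j', b') := hιinj (hb.trans hb'.symm)
    exact hjj' (congrArg Prod.fst this)
  · intro j
    constructor
    · intro i hi
      have hno : ¬ ∃ b, ι (j, b) = i := by
        rintro ⟨b, hb⟩
        exact hi (mem_image.2 ⟨b, mem_univ b, hb⟩)
      simp [hno]
    · rw [hX]
      suffices h : fSurjB m (fun i => if h : ∃ b, ι (j, b) = i then μ h.choose else X i) = true by
        simp [h]
      simp only [fSurjB, decide_eq_true_eq]
      rw [Finset.eq_univ_iff_forall]
      intro v
      simp only [img, mem_image, mem_univ, true_and]
      by_cases hv : v ∈ img X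
      · refine ⟨rep v, ?_⟩
        have hno : ¬ ∃ b, ι (j, b) = rep v := by
          rintro ⟨b, hb⟩
          exact hιR (j, b) (hb ▸ mem_image.2 ⟨v, hv, rfl⟩)
        rw [dif_neg hno]
        exact hrepspec v hv
      · obtain ⟨b, hb⟩ := hμsurj v (Finset.mem_compl.2 hv)
        refine ⟨ι (j, b), ?_⟩
        have hex : ∃ b', ι (j, b') = ι (j, b) := ⟨b, rfl⟩
        rw [dif_pos hex]
        have : (j, hex.choose) = (j, b) := hιinj hex.choose_spec
        rw [show hex.choose = b from congrArg Prod.snd this]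
        exact hb


lemma surj_count_lower (hm : 30 ≤ m) (S : Finset (Fin (MM m))) (hS : S.card = MM m - 1) :
    ((MM m : ℝ) - 1) ^ (NN m) / 3 ≤ ((univ.filter (fun X : Str m => img X = S)).card : ℝ) := by
  refine le_trans (six_term_lower hm) ?_
  have hint := count_ge (m := m) S
  rw [hS] at hint
  exact_mod_cast hint

lemma MM_le_NN (hm : 30 ≤ m) : MM m ≤ NN m := by
  have hlog : (0.6931:ℝ) ≤ Real.log 2 := le_of_lt (lt_of_lt_of_le (by norm_num) (le_of_lt Real.log_two_gt_d9))
  have hmr : (30:ℝ) ≤ (m:ℝ) := by exact_mod_cast hm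
  have h : (MM m : ℝ) ≤ (NN m : ℝ) := by
    have h1 : (MM m : ℝ) * 1 ≤ (MM m : ℝ) * ((m:ℝ) * Real.log 2) := by
      apply mul_le_mul_of_nonneg_left _ (by positivity)
      nlinarith
    have h2 : (MM m : ℝ) * ((m:ℝ) * Real.log 2) = (MM m : ℝ) * (m:ℝ) * Real.log 2 := by ring
    have := NN_lo (m := m)
    linarith
  exact_mod_cast h

lemma two_le_MM' (hm : 30 ≤ m) : 2 ≤ MM m := by
  have := MM_big hm
  have : (2:ℝ) ≤ (MM m : ℝ) := by linarith
  exact_mod_cast this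

lemma A1_lower (hm : 30 ≤ m) :
    (MM m : ℝ) * (((MM m : ℝ) - 1) ^ (NN m) / 3)
      ≤ ((univ.filter (fun X : Str m => (img X)ᶜ.card = 1)).card : ℝ) := by
  classical
  have hsplit : univ.filter (fun X : Str m => (img X)ᶜ.card = 1)
      = univ.biUnion (fun y : Fin (MM m) =>
          univ.filter (fun X : Str m => img X = {y}ᶜ)) := by
    ext X
    simp only [mem_filter, mem_univ, true_and, mem_biUnion]
    constructor
    · intro hy
      obtain ⟨y, hy⟩ := Finset.card_eq_one.1 hy
      refine ⟨y, ?_⟩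
      have h3 := congrArg (·ᶜ) hy
      simpa using h3
    · rintro ⟨y, hy⟩
      rw [Finset.card_eq_one]
      exact ⟨y, by rw [hy, compl_compl]⟩
  have hdisj : ∀ y ∈ (univ : Finset (Fin (MM m))), ∀ y' ∈ univ, y ≠ y' →
      Disjoint (univ.filter (fun X : Str m => img X = {y}ᶜ))
        (univ.filter (fun X : Str m => img X = {y'}ᶜ)) := by
    intro y _ y' _ hne
    simp only [disjoint_left, mem_filter, mem_univ, true_and]
    intro X h1 h2
    apply hne
    have : ({y} : Finset (Fin (MM m))) = {y'} := by
      have := h1.symm.trans h2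
      have h3 := congrArg (·ᶜ) this
      simpa using h3
    simpa using this
  rw [hsplit, card_biUnion hdisj]
  have hcomp : ∀ y : Fin (MM m), (({y}ᶜ : Finset (Fin (MM m))).card) = MM m - 1 := by
    intro y
    rw [card_compl, card_singleton, Fintype.card_fin]
  push_cast
  have hterm : ∀ y : Fin (MM m),
      ((MM m : ℝ) - 1) ^ (NN m) / 3
        ≤ ((univ.filter (fun X : Str m => img X = {y}ᶜ)).card : ℝ) :=
    fun y => surj_count_lower hm _ (hcomp y)
  calc (MM m : ℝ) * (((MM m : ℝ) - 1) ^ (NN m) / 3)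
      = ∑ _y : Fin (MM m), ((MM m : ℝ) - 1) ^ (NN m) / 3 := by
        rw [sum_const, card_univ, Fintype.card_fin, nsmul_eq_mul]
    _ ≤ ∑ y : Fin (MM m), ((univ.filter (fun X : Str m => img X = {y}ᶜ)).card : ℝ) :=
        sum_le_sum fun y _ => hterm y

lemma Aj_upper (j : ℕ) :
    (univ.filter (fun X : Str m => (img X)ᶜ.card = j)).card
      ≤ (MM m).choose j * (MM m - j) ^ (NN m) := by
  classical
  have hsub : univ.filter (fun X : Str m => (img X)ᶜ.card = j)
      ⊆ (powersetCard j (univ : Finset (Fin (MM m)))).biUnion (fun T => pif Tᶜ) := by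
    intro X hX
    simp only [mem_filter, mem_univ, true_and] at hX
    apply mem_biUnion.2
    refine ⟨(img X)ᶜ, mem_powersetCard.2 ⟨subset_univ _, hX⟩, ?_⟩
    rw [mem_pif]
    intro i
    rw [compl_compl]
    exact mem_image.2 ⟨i, mem_univ i, rfl⟩
  calc (univ.filter (fun X : Str m => (img X)ᶜ.card = j)).card
      ≤ ((powersetCard j (univ : Finset (Fin (MM m)))).biUnion (fun T => pif Tᶜ)).card :=
        card_le_card hsub
    _ ≤ ∑ T ∈ powersetCard j (univ : Finset (Fin (MM m))), (pif Tᶜ).card := card_biUnion_le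
    _ = ∑ _T ∈ powersetCard j (univ : Finset (Fin (MM m))), (MM m - j) ^ (NN m) := by
        refine sum_congr rfl fun T hT => ?_
        obtain ⟨-, hc⟩ := mem_powersetCard.1 hT
        rw [card_pif, card_compl, Fintype.card_fin, hc]
    _ = (MM m).choose j * (MM m - j) ^ (NN m) := by
        rw [sum_const, card_powersetCard, card_univ, Fintype.card_fin, smul_eq_mul]

lemma Aj_upper_real (hm : 30 ≤ m) {j : ℕ} (hj2 : 1 ≤ j) (hjM : j ≤ MM m) :
    ((univ.filter (fun X : Str m => (img X)ᶜ.card = j)).card : ℝ)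
      ≤ (MM m : ℝ) * ((MM m : ℝ) - 1) ^ (NN m) / (j.factorial : ℝ) := by
  have hfacpos : (0:ℝ) < (j.factorial : ℝ) := by
    exact_mod_cast Nat.factorial_pos j
  rw [le_div_iff₀ hfacpos]
  have h1 : 1 ≤ MM m := two_le_MM' hm |>.trans' (by norm_num)
  -- key : choose(M,j) * j! * (M-j)^N ≤ M * (M-1)^N
  have hkey : ((MM m).choose j : ℝ) * ((( MM m - j : ℕ)) : ℝ) ^ (NN m) * (j.factorial : ℝ)
      ≤ (MM m : ℝ) * ((MM m : ℝ) - 1) ^ (NN m) := by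
    have hdesc : (MM m).choose j * j.factorial = (MM m).descFactorial j := by
      rw [Nat.descFactorial_eq_factorial_mul_choose]; ring
    obtain ⟨i, rfl⟩ : ∃ i, j = i + 1 := ⟨j - 1, by omega⟩
    have hMsucc : MM m = (MM m - 1) + 1 := by omega
    have hdesc2 : (MM m).descFactorial (i+1) = MM m * (MM m - 1).descFactorial i := by
      conv_lhs => rw [hMsucc]
      rw [Nat.succ_descFactorial_succ]
      rw [← hMsucc]
    have hieq : MM m - (i+1) = MM m - 1 - i := by omega
    have hit : i ≤ MM m - 1 := by omega
    have hup := term_upper hm hit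
    have hdesc3 : ((MM m - 1).choose i : ℝ) * (i.factorial : ℝ)
        = (((MM m - 1).descFactorial i : ℕ) : ℝ) := by
      rw [Nat.descFactorial_eq_factorial_mul_choose]; push_cast; ring
    have hup2 : (((MM m - 1).descFactorial i : ℕ) : ℝ) * (((MM m - 1 - i : ℕ)) : ℝ) ^ (NN m)
        ≤ ((MM m : ℝ) - 1) ^ (NN m) := by
      rw [← hdesc3]
      calc ((MM m - 1).choose i : ℝ) * (i.factorial : ℝ) * (((MM m - 1 - i : ℕ)) : ℝ) ^ (NN m)
          = ((MM m - 1).choose i : ℝ) * (((MM m - 1 - i : ℕ)) : ℝ) ^ (NN m) * (i.factorial : ℝ) := by ring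
        _ ≤ ((MM m : ℝ) - 1) ^ (NN m) := hup
    calc ((MM m).choose (i+1) : ℝ) * ((( MM m - (i+1) : ℕ)) : ℝ) ^ (NN m) * ((i+1).factorial : ℝ)
        = (((MM m).choose (i+1) * (i+1).factorial : ℕ) : ℝ) * ((( MM m - (i+1) : ℕ)) : ℝ) ^ (NN m) := by
          push_cast; ring
      _ = (((MM m).descFactorial (i+1) : ℕ) : ℝ) * ((( MM m - (i+1) : ℕ)) : ℝ) ^ (NN m) := by
          rw [hdesc]
      _ = (MM m : ℝ) * ((((MM m - 1).descFactorial i : ℕ) : ℝ) * (((MM m - 1 - i : ℕ)) : ℝ) ^ (NN m)) := by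
          rw [hdesc2, hieq]; push_cast; ring
      _ ≤ (MM m : ℝ) * ((MM m : ℝ) - 1) ^ (NN m) := by
          apply mul_le_mul_of_nonneg_left hup2 (by positivity)
  refine le_trans ?_ hkey
  have := Aj_upper (m := m) j
  have hcast : ((univ.filter (fun X : Str m => (img X)ᶜ.card = j)).card : ℝ)
      ≤ ((MM m).choose j : ℝ) * ((( MM m - j : ℕ)) : ℝ) ^ (NN m) := by
    calc ((univ.filter (fun X : Str m => (img X)ᶜ.card = j)).card : ℝ)
        ≤ (((MM m).choose j * (MM m - j) ^ (NN m) : ℕ) : ℝ) := Nat.cast_le.2 this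
      _ = ((MM m).choose j : ℝ) * ((( MM m - j : ℕ)) : ℝ) ^ (NN m) := by push_cast; ring
  calc ((univ.filter (fun X : Str m => (img X)ᶜ.card = j)).card : ℝ) * (j.factorial : ℝ)
      ≤ (((MM m).choose j : ℝ) * ((( MM m - j : ℕ)) : ℝ) ^ (NN m)) * (j.factorial : ℝ) :=
        mul_le_mul_of_nonneg_right hcast (by positivity)
    _ = ((MM m).choose j : ℝ) * ((( MM m - j : ℕ)) : ℝ) ^ (NN m) * (j.factorial : ℝ) := by ring

lemma series_bound (K : ℕ) :
    ∑ j ∈ Icc 2 K, ((0.582 - 1/(j:ℝ)) / (j.factorial : ℝ)) ≤ 0.102 := by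
  have hnngen : ∀ j : ℕ, 2 ≤ j → (0:ℝ) ≤ (0.582 - 1/(j:ℝ)) / (j.factorial : ℝ) := by
    intro j hj
    have hj2 : (2:ℝ) ≤ (j:ℝ) := by exact_mod_cast hj
    have : 1/(j:ℝ) ≤ 1/2 := by
      apply one_div_le_one_div_of_le <;> linarith
    apply div_nonneg (by linarith) (by positivity)
  have hnn7 : ∀ j ∈ Icc (2:ℕ) 7, (0:ℝ) ≤ (0.582 - 1/(j:ℝ)) / ((j.factorial : ℕ) : ℝ) :=
    fun j hj => hnngen j (mem_Icc.1 hj).1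
  have main : ∀ K : ℕ, 7 ≤ K →
      ∑ j ∈ Icc 2 K, ((0.582 - 1/(j:ℝ)) / (j.factorial : ℝ))
        + 1.164/(((K+1).factorial : ℕ) : ℝ) ≤ 0.102 := by
    intro K hK
    induction K, hK using Nat.le_induction with
    | base =>
      have hicc : Icc 2 7 = ({2,3,4,5,6,7} : Finset ℕ) := by decide
      rw [hicc]
      norm_num [Nat.factorial]
    | succ K hK ih =>
      rw [Finset.sum_Icc_succ_top (by omega : 2 ≤ K+1)]
      have hfp : (0:ℝ) < (((K+1).factorial : ℕ) : ℝ) := by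
        exact_mod_cast Nat.factorial_pos (K+1)
      have h1 : (0.582 - 1/(((K+1):ℕ):ℝ))/((((K+1)).factorial : ℕ) : ℝ)
          ≤ 0.582/(((K+1).factorial : ℕ) : ℝ) :=
        (div_le_div_iff_of_pos_right hfp).2 (sub_le_self _ (by positivity))
      have h2 : (1.164:ℝ)/(((K+2).factorial : ℕ) : ℝ) ≤ 0.582/(((K+1).factorial : ℕ) : ℝ) := by
        have hfe : ((K+2).factorial : ℕ) = (K+2) * (K+1).factorial := Nat.factorial_succ (K+1)
        rw [hfe]
        rw [div_le_div_iff₀ (by positivity) hfp]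
        push_cast
        nlinarith [Nat.cast_nonneg (α := ℝ) K, hfp]
      have h3 : (0.582:ℝ)/(((K+1).factorial : ℕ) : ℝ) + 0.582/(((K+1).factorial : ℕ) : ℝ)
          = 1.164/(((K+1).factorial : ℕ) : ℝ) := by ring
      push_cast at h1 h2 h3 ⊢
      rw [show K+1+1 = K+2 from rfl]
      linarith
  rcases le_or_gt K 7 with hK | hK
  · have hsub : Icc 2 K ⊆ Icc 2 7 := Icc_subset_Icc_right hK
    have h7 := main 7 (le_refl 7)
    have htail : (0:ℝ) ≤ 1.164/((8).factorial : ℝ) := by positivity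
    have hmono := sum_le_sum_of_subset_of_nonneg hsub (fun j hj _ => hnn7 j hj)
    linarith
  · have := main K (by omega)
    have htail : (0:ℝ) ≤ 1.164/(((K+1).factorial : ℕ) : ℝ) := by positivity
    linarith


lemma k_le_MM (X : Str m) : (img X)ᶜ.card ≤ MM m := by
  calc (img X)ᶜ.card ≤ Fintype.card (Fin (MM m)) := card_le_univ _
  _ = MM m := Fintype.card_fin _

lemma k_pos {X : Str m} (hX : fSurjB m X = false) : 1 ≤ (img X)ᶜ.card := by
  rcases Finset.eq_empty_or_nonempty (img X)ᶜ with h | h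
  · exfalso
    have h2 : img X = univ := by
      have := congrArg (·ᶜ) h
      simpa using this
    simp [fSurjB, h2] at hX
  · exact Finset.card_pos.2 h

lemma sum_inv_k (hm : 30 ≤ m) :
    0.582 * (((univ.filter (fun X : Str m => fSurjB m X = false)).card : ℕ) : ℝ)
      ≤ ∑ X ∈ univ.filter (fun X : Str m => fSurjB m X = false),
          1 / (((img X)ᶜ.card : ℕ) : ℝ) := by
  classical
  set D := univ.filter (fun X : Str m => fSurjB m X = false) with hD
  have hmap : ∀ X ∈ D, (img X)ᶜ.card ∈ range (MM m + 1) := by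
    intro X _
    rw [mem_range]
    exact Nat.lt_succ_of_le (k_le_MM X)
  set A : ℕ → ℕ := fun j => (D.filter (fun X => (img X)ᶜ.card = j)).card with hA
  have hsum1 : ∑ X ∈ D, 1 / (((img X)ᶜ.card : ℕ) : ℝ)
      = ∑ j ∈ range (MM m + 1), ((A j : ℕ) : ℝ) * (1/(j:ℝ)) := by
    rw [← sum_fiberwise_of_maps_to hmap (fun X => 1 / (((img X)ᶜ.card : ℕ) : ℝ))]
    refine sum_congr rfl fun j _ => ?_
    calc ∑ X ∈ D.filter (fun X => (img X)ᶜ.card = j), 1 / (((img X)ᶜ.card : ℕ) : ℝ)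
        = ∑ X ∈ D.filter (fun X => (img X)ᶜ.card = j), 1/(j:ℝ) := by
          refine sum_congr rfl fun X hX => ?_
          rw [(mem_filter.1 hX).2]
      _ = ((A j : ℕ) : ℝ) * (1/(j:ℝ)) := by rw [sum_const, nsmul_eq_mul]
  have hsum2 : ((D.card : ℕ) : ℝ) = ∑ j ∈ range (MM m + 1), ((A j : ℕ) : ℝ) := by
    rw [card_eq_sum_card_fiberwise hmap]
    push_cast
    rfl
  have hA0 : A 0 = 0 := by
    rw [hA]
    simp only [card_eq_zero, filter_eq_empty_iff]
    intro X hX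
    have h1 := k_pos (mem_filter.1 hX).2
    show ¬ (img X)ᶜ = ∅
    intro h2
    simp [h2] at h1
  have hAeq : ∀ j, 1 ≤ j →
      A j = (univ.filter (fun X : Str m => (img X)ᶜ.card = j)).card := by
    intro j hj
    show (D.filter (fun X => (img X)ᶜ.card = j)).card = _
    rw [hD, filter_filter]
    refine congrArg card (filter_congr fun X _ => ?_)
    constructor
    · rintro ⟨-, h⟩; exact h
    · intro h
      refine ⟨?_, h⟩
      rcases Bool.eq_false_or_eq_true (fSurjB m X) with hb | hb
      swap
      · exact hb
      · exfalso
        have h2 : img X = univ := by simpa [fSurjB] using hb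
        rw [h2] at h
        simp at h
        omega
  have h1M : 1 ≤ MM m := le_trans (by norm_num) (two_le_MM' hm)
  have htrc : ((MM m - 1 : ℕ) : ℝ) = (MM m : ℝ) - 1 := tr_cast h1M
  set T : ℝ := (MM m : ℝ) * ((MM m : ℝ) - 1) ^ (NN m) with hT
  have hTnn : (0:ℝ) ≤ T := by
    rw [hT, ← htrc]
    positivity
  have key1 : T/3 ≤ ((A 1 : ℕ) : ℝ) := by
    rw [hAeq 1 (le_refl 1)]
    have := A1_lower hm
    rw [hT]
    linarith
  have key2 : ∑ j ∈ Icc 2 (MM m), ((A j : ℕ) : ℝ) * (0.582 - 1/(j:ℝ)) ≤ 0.102 * T := by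
    have hstep : ∀ j ∈ Icc 2 (MM m),
        ((A j : ℕ) : ℝ) * (0.582 - 1/(j:ℝ)) ≤ (T / ((j.factorial : ℕ) : ℝ)) * (0.582 - 1/(j:ℝ)) := by
      intro j hj
      obtain ⟨hj2, hjM⟩ := mem_Icc.1 hj
      have hj2r : (2:ℝ) ≤ (j:ℝ) := by exact_mod_cast hj2
      have hnn : (0:ℝ) ≤ 0.582 - 1/(j:ℝ) := by
        have : 1/(j:ℝ) ≤ 1/2 := by
          apply one_div_le_one_div_of_le <;> linarith
        linarith
      apply mul_le_mul_of_nonneg_right _ hnn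
      rw [hAeq j (by omega)]
      have := Aj_upper_real hm (by omega : 1 ≤ j) hjM
      rw [hT]
      calc ((univ.filter (fun X : Str m => (img X)ᶜ.card = j)).card : ℝ)
          ≤ (MM m : ℝ) * ((MM m : ℝ) - 1) ^ (NN m) / (j.factorial : ℝ) := this
        _ = (MM m : ℝ) * ((MM m : ℝ) - 1) ^ (NN m) / ((j.factorial : ℕ) : ℝ) := rfl
    calc ∑ j ∈ Icc 2 (MM m), ((A j : ℕ) : ℝ) * (0.582 - 1/(j:ℝ))
        ≤ ∑ j ∈ Icc 2 (MM m), (T / ((j.factorial : ℕ) : ℝ)) * (0.582 - 1/(j:ℝ)) :=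
          sum_le_sum hstep
      _ = T * ∑ j ∈ Icc 2 (MM m), (0.582 - 1/(j:ℝ)) / ((j.factorial : ℕ) : ℝ) := by
          rw [mul_sum]
          refine sum_congr rfl fun j _ => ?_
          ring
      _ ≤ T * 0.102 := mul_le_mul_of_nonneg_left (series_bound (MM m)) hTnn
      _ = 0.102 * T := by ring
  -- split the index range
  have hsplit : range (MM m + 1) = insert 0 (insert 1 (Icc 2 (MM m))) := by
    ext x
    simp only [mem_range, mem_insert, mem_Icc]
    omega
  have h0ni : (0:ℕ) ∉ insert 1 (Icc 2 (MM m)) := by simp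
  have h1ni : (1:ℕ) ∉ Icc 2 (MM m) := by simp
  rw [hsum1, hsum2, hsplit, sum_insert h0ni, sum_insert h1ni, sum_insert h0ni, sum_insert h1ni]
  rw [hA0]
  simp only [Nat.cast_zero, zero_mul, Nat.cast_one, zero_add]
  have hid : 0.582 * (∑ j ∈ Icc 2 (MM m), ((A j : ℕ) : ℝ))
      - (∑ j ∈ Icc 2 (MM m), ((A j : ℕ) : ℝ) * (1/(j:ℝ)))
      = ∑ j ∈ Icc 2 (MM m), ((A j : ℕ) : ℝ) * (0.582 - 1/(j:ℝ)) := by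
    rw [mul_sum, ← sum_sub_distrib]
    refine sum_congr rfl fun j _ => ?_
    ring
  have hfin : 0.582 * (((A 1 : ℕ) : ℝ) + ∑ j ∈ Icc 2 (MM m), ((A j : ℕ) : ℝ))
      ≤ ((A 1 : ℕ) : ℝ) * (1/(1:ℝ)) + ∑ j ∈ Icc 2 (MM m), ((A j : ℕ) : ℝ) * (1/(j:ℝ)) := by
    have e1 : ((A 1 : ℕ) : ℝ) * (1/(1:ℝ)) = ((A 1 : ℕ) : ℝ) := by norm_num
    rw [e1]
    nlinarith [key1, key2, hid, hTnn]
  linarith [hfin]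

lemma nonsurj_exists (hm : 30 ≤ m) :
    (0:ℝ) < (((univ.filter (fun X : Str m => fSurjB m X = false)).card : ℕ) : ℝ) := by
  have h2M := two_le_MM' hm
  have hX0 : fSurjB m (fun _ => (⟨0, by omega⟩ : Fin (MM m))) = false := by
    simp only [fSurjB, decide_eq_false_iff_not]
    intro hc
    have h1 : (⟨1, by omega⟩ : Fin (MM m)) ∈ img (fun _ : Fin (NN m) => (⟨0, by omega⟩ : Fin (MM m))) := by
      rw [hc]; exact mem_univ _
    simp only [img, mem_image, mem_univ, true_and] at h1
    obtain ⟨i, hi⟩ := h1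
    exact absurd (congrArg Fin.val hi) (by norm_num)
  have : (fun _ => (⟨0, by omega⟩ : Fin (MM m))) ∈ univ.filter (fun X : Str m => fSurjB m X = false) :=
    mem_filter.2 ⟨mem_univ _, hX0⟩
  have hpos : 0 < (univ.filter (fun X : Str m => fSurjB m X = false)).card :=
    card_pos.2 ⟨_, this⟩
  exact_mod_cast hpos



lemma bs_false_ge (hm : 30 ≤ m) {X : Str m} (hX : fSurjB m X = false) :
    ((NN m : ℝ) - MM m) / (((img X)ᶜ.card : ℕ) : ℝ) ≤ ((bs (fSurjB m) X : ℕ) : ℝ) := by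
  have hMN := MM_le_NN hm
  have hN : 0 < NN m := lt_of_lt_of_le MM_pos hMN
  have hb := le_bs (bs_false_mem hN hX)
  set k := (img X)ᶜ.card with hk
  set s := (img X).card with hs
  have hk1 : 1 ≤ k := k_pos hX
  have hsk : s + k = MM m := by
    rw [hs, hk]
    rw [Finset.card_add_card_compl]
    exact Fintype.card_fin _
  have hsN : s ≤ NN m := by
    rw [hs]
    calc (img X).card ≤ (univ : Finset (Fin (NN m))).card := Finset.card_image_le
    _ = NN m := by simp
  set q := (NN m - s)/k with hq
  set r := (NN m - s) % k with hr
  have h1 : k * q + r = NN m - s := Nat.div_add_mod _ _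
  have hrk : r < k := Nat.mod_lt _ (by omega)
  have hkey : NN m - MM m ≤ q * k := by
    calc NN m - MM m = (NN m - s) - k := by omega
    _ ≤ (NN m - s) - r := Nat.sub_le_sub_left (le_of_lt hrk) _
    _ = k * q := (Nat.eq_sub_of_add_eq h1).symm
    _ = q * k := Nat.mul_comm _ _
  have hkr : (0:ℝ) < ((k:ℕ):ℝ) := by exact_mod_cast hk1
  rw [div_le_iff₀ hkr]
  have hcast : ((NN m:ℝ) - MM m) = ((NN m - MM m : ℕ):ℝ) := by
    rw [Nat.cast_sub hMN]
  rw [hcast]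
  calc ((NN m - MM m : ℕ):ℝ) ≤ ((q * k : ℕ):ℝ) := by exact_mod_cast hkey
  _ ≤ ((bs (fSurjB m) X * k : ℕ):ℝ) := by
      apply Nat.cast_le.2
      exact Nat.mul_le_mul_right _ hb
  _ = ((bs (fSurjB m) X : ℕ):ℝ) * ((k:ℕ):ℝ) := by push_cast; ring

lemma avg_false (hm : 30 ≤ m) :
    0.582 * ((NN m : ℝ) - (MM m : ℝ)) ≤ avgBs m (fSurjB m) false := by
  classical
  have hden := nonsurj_exists hm
  have hNM : (0:ℝ) ≤ (NN m : ℝ) - (MM m : ℝ) := by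
    have := MM_le_NN hm
    have : (MM m : ℝ) ≤ (NN m : ℝ) := by exact_mod_cast this
    linarith
  rw [avgBs, le_div_iff₀ hden]
  calc 0.582 * ((NN m : ℝ) - (MM m : ℝ))
        * (((univ.filter (fun X : Str m => fSurjB m X = false)).card : ℕ) : ℝ)
      = ((NN m : ℝ) - (MM m : ℝ)) * (0.582 * (((univ.filter (fun X : Str m => fSurjB m X = false)).card : ℕ) : ℝ)) := by
        ring
    _ ≤ ((NN m : ℝ) - (MM m : ℝ)) * ∑ X ∈ univ.filter (fun X : Str m => fSurjB m X = false),
          1 / (((img X)ᶜ.card : ℕ) : ℝ) := mul_le_mul_of_nonneg_left (sum_inv_k hm) hNM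
    _ = ∑ X ∈ univ.filter (fun X : Str m => fSurjB m X = false),
          ((NN m : ℝ) - (MM m : ℝ)) / (((img X)ᶜ.card : ℕ) : ℝ) := by
        rw [mul_sum]
        refine sum_congr rfl fun X _ => ?_
        ring
    _ ≤ ∑ X ∈ univ.filter (fun X : Str m => fSurjB m X = false), ((bs (fSurjB m) X : ℕ) : ℝ) := by
        refine sum_le_sum fun X hX => ?_
        exact bs_false_ge hm (mem_filter.1 hX).2


lemma exists_surj (hm : 30 ≤ m) : ∃ X : Str m, fSurjB m X = true := by
  have hMN := MM_le_NN hm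
  refine ⟨fun i => ⟨i.val % MM m, Nat.mod_lt _ MM_pos⟩, ?_⟩
  simp only [fSurjB, decide_eq_true_eq]
  rw [Finset.eq_univ_iff_forall]
  intro y
  simp only [img, mem_image, mem_univ, true_and]
  refine ⟨⟨y.val, lt_of_lt_of_le y.isLt hMN⟩, ?_⟩
  ext
  simp [Nat.mod_eq_of_lt y.isLt]

lemma avg_true (hm : 30 ≤ m) : (MM m : ℝ) ≤ avgBs m (fSurjB m) true := by
  classical
  have hne : (0:ℝ) < ((univ.filter (fun X : Str m => fSurjB m X = true)).card : ℝ) := by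
    obtain ⟨X, hX⟩ := exists_surj hm
    have : X ∈ univ.filter (fun X : Str m => fSurjB m X = true) := mem_filter.2 ⟨mem_univ _, hX⟩
    exact_mod_cast card_pos.2 ⟨_, this⟩
  rw [avgBs, le_div_iff₀ hne]
  calc (MM m : ℝ) * ((univ.filter (fun X : Str m => fSurjB m X = true)).card : ℝ)
      = ∑ _X ∈ univ.filter (fun X : Str m => fSurjB m X = true), (MM m : ℝ) := by
        rw [sum_const, nsmul_eq_mul]; ring
    _ ≤ ∑ X ∈ univ.filter (fun X : Str m => fSurjB m X = true), ((bs (fSurjB m) X : ℕ) : ℝ) := by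
        refine sum_le_sum fun X hX => ?_
        exact_mod_cast bs_true_ge (by omega) (mem_filter.1 hX).2


end AuxGLN

/-- for every `ε > 0`, for all sufficiently large `m`:
`bs̄_1(f_Surj) ≥ M` and `bs̄_0(f_Surj) ≥ (1/(e−1) − ε)·(N − M)`. -/
theorem stmt15 : ∀ ε : ℝ, 0 < ε → ∃ m0 : ℕ, ∀ m : ℕ, m0 ≤ m →
    (MM m : ℝ) ≤ avgBs m (fSurjB m) true ∧
    (1 / (Real.exp 1 - 1) - ε) * ((NN m : ℝ) - (MM m : ℝ)) ≤
      avgBs m (fSurjB m) false := by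
  intro ε hε
  refine ⟨30, fun m hm => ⟨avg_true hm, ?_⟩⟩
  have hNM : (0:ℝ) ≤ (NN m : ℝ) - (MM m : ℝ) := by
    have := MM_le_NN hm
    have h2 : (MM m : ℝ) ≤ (NN m : ℝ) := by exact_mod_cast this
    linarith
  have he : (2.7182818283:ℝ) < Real.exp 1 := Real.exp_one_gt_d9
  have hc : 1 / (Real.exp 1 - 1) - ε ≤ 0.582 := by
    have hpos : (0:ℝ) < Real.exp 1 - 1 := by linarith
    have h1 : 1 / (Real.exp 1 - 1) ≤ 0.582 := by
      rw [div_le_iff₀ hpos]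
      nlinarith
    linarith
  calc (1 / (Real.exp 1 - 1) - ε) * ((NN m : ℝ) - (MM m : ℝ))
      ≤ 0.582 * ((NN m : ℝ) - (MM m : ℝ)) := mul_le_mul_of_nonneg_right hc hNM
    _ ≤ avgBs m (fSurjB m) false := avg_false hm



end
end GLN
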